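/- arXiv:1510.05367 — 3 statements merged into one kernel-verified Lean document; each statement's English description precedes it below -/
import Mathlib

section
/- Let T : ℝ → Matrix (n×n, ℝ) be differentiable with T(t) invertible for all t. If T'(t)·T(t)⁻¹ is skew-symmetric for every t and T(τ) ∈ SO(n) for some τ, then T(t) ∈ SO(n) for all t. Conversely, if T(t) ∈ SO(n) for all t, then T'(t)·T(t)⁻¹ is skew-symmetric for all t. -/
open Matrix

lemma derivTT {n : ℕ} (T T' : ℝ → Matrix (Fin n) (Fin n) ℝ)
    (hT' : ∀ t i j, HasDerivAt (fun s => T s i j) (T' t i j) t) (t : ℝ) (i j : Fin n) :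
    HasDerivAt (fun s => ((T s)ᵀ * T s) i j) (((T' t)ᵀ * T t + (T t)ᵀ * T' t) i j) t := by
  simp only [Matrix.mul_apply, Matrix.transpose_apply, Matrix.add_apply]
  rw [← Finset.sum_add_distrib]
  exact HasDerivAt.fun_sum fun k _ => ((hT' t k i).mul (hT' t k j)).congr_deriv (by ring)

theorem stmt3 {n : ℕ} (T T' : ℝ → Matrix (Fin n) (Fin n) ℝ)
    (hT' : ∀ t i j, HasDerivAt (fun s => T s i j) (T' t i j) t)
    (hinv : ∀ t, IsUnit (T t)) (τ : ℝ) :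
    (((∀ t, (T' t * (T t)⁻¹)ᵀ = -(T' t * (T t)⁻¹)) ∧ (T τ)ᵀ * T τ = 1 ∧ (T τ).det = 1) →
      ∀ t, (T t)ᵀ * T t = 1 ∧ (T t).det = 1) ∧
    ((∀ t, (T t)ᵀ * T t = 1 ∧ (T t).det = 1) →
      ∀ t, (T' t * (T t)⁻¹)ᵀ = -(T' t * (T t)⁻¹)) := by
  have hdetu : ∀ t, IsUnit (T t).det := fun t => (Matrix.isUnit_iff_isUnit_det _).mp (hinv t)
  constructor
  · rintro ⟨hskew, horth, hdet⟩
    -- derivative of Tᵀ T is zero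
    have hzero : ∀ t, (T' t)ᵀ * T t + (T t)ᵀ * T' t = 0 := by
      intro t
      have hT'eq : T' t = (T' t * (T t)⁻¹) * T t := by
        rw [Matrix.mul_assoc, Matrix.nonsing_inv_mul _ (hdetu t), Matrix.mul_one]
      set A := T' t * (T t)⁻¹ with hA
      calc (T' t)ᵀ * T t + (T t)ᵀ * T' t
          = (T t)ᵀ * (Aᵀ + A) * T t := by
            rw [hT'eq]; simp only [Matrix.transpose_mul]; noncomm_ring
        _ = 0 := by rw [hskew t]; simp [hA]
    -- Tᵀ T constant
    have hconst : ∀ t, (T t)ᵀ * T t = 1 := by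
      intro t
      have : (T t)ᵀ * T t = (T τ)ᵀ * T τ := by
        ext i j
        have hF : ∀ x, HasDerivAt (fun s => ((T s)ᵀ * T s) i j) 0 x := by
          intro x
          have := derivTT T T' hT' x i j
          rwa [hzero x, Matrix.zero_apply] at this
        exact is_const_of_deriv_eq_zero (fun x => (hF x).differentiableAt)
          (fun x => (hF x).deriv) t τ
      rw [this, horth]
    refine fun t => ⟨hconst t, ?_⟩
    -- det: continuous, squares to 1, equals 1 at τ
    have hsq : ∀ t, (T t).det = 1 ∨ (T t).det = -1 := by
      intro t
      have h2 : (T t).det ^ 2 = 1 := by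
        have := congrArg Matrix.det (hconst t)
        rwa [Matrix.det_mul, Matrix.det_transpose, ← sq, Matrix.det_one] at this
      have h3 : (T t).det * (T t).det = 1 := by rw [← sq]; exact h2
      rcases mul_self_eq_one_iff.mp h3 with h | h
      · exact Or.inl h
      · exact Or.inr h
    have hcont : Continuous fun t => (T t).det := by
      have hTc : Continuous T :=
        continuous_matrix fun i j => continuous_iff_continuousAt.mpr
          fun t => (hT' t i j).differentiableAt.continuousAt
      exact hTc.matrix_det
    by_contra hne
    rcases hsq t with h | h
    · exact hne h
    · -- IVT: det hits 0, contradiction with invertibility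
      have h0 : (0 : ℝ) ∈ Set.uIcc ((T t).det) ((T τ).det) := by
        rw [h, hdet]
        constructor <;> simp [min_le_iff, le_max_iff]
      have := intermediate_value_uIcc (a := t) (b := τ)
        (f := fun s => (T s).det) hcont.continuousOn h0
      obtain ⟨s, _, hs⟩ := this
      exact (hdetu s).ne_zero hs
  · intro horth t
    have h1 : (T t)ᵀ * T t = 1 := (horth t).1
    have hTinv : (T t)⁻¹ = (T t)ᵀ := Matrix.inv_eq_left_inv h1
    have h2 : T t * (T t)ᵀ = 1 := mul_eq_one_comm.mp h1
    -- derivative of constant Tᵀ T is zero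
    have hzero : (T' t)ᵀ * T t + (T t)ᵀ * T' t = 0 := by
      ext i j
      have hF : ∀ x, HasDerivAt (fun s => ((T s)ᵀ * T s) i j) 0 x := by
        intro x
        have : (fun s => ((T s)ᵀ * T s) i j) = fun _ => (1 : Matrix (Fin n) (Fin n) ℝ) i j := by
          funext s; rw [(horth s).1]
        rw [this]
        exact hasDerivAt_const _ _
      have hd := derivTT T T' hT' t i j
      have := hd.unique (hF t)
      simp [this]
    rw [hTinv]
    have : (T' t * (T t)ᵀ)ᵀ = T t * (T' t)ᵀ := by
      rw [Matrix.transpose_mul, Matrix.transpose_transpose]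
    rw [this]
    -- from hzero: T'ᵀ T = - Tᵀ T'; multiply by T left, Tᵀ right
    have key : T t * ((T' t)ᵀ * T t) * (T t)ᵀ = - (T t * ((T t)ᵀ * T' t) * (T t)ᵀ) := by
      have : (T' t)ᵀ * T t = -((T t)ᵀ * T' t) := by
        have := hzero
        linear_combination (norm := noncomm_ring) this
      rw [this]; noncomm_ring
    calc T t * (T' t)ᵀ = T t * ((T' t)ᵀ * T t) * (T t)ᵀ := by
          rw [Matrix.mul_assoc, Matrix.mul_assoc, h2, Matrix.mul_one]
      _ = - (T t * ((T t)ᵀ * T' t) * (T t)ᵀ) := key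
      _ = -(T' t * (T t)ᵀ) := by
          rw [← Matrix.mul_assoc, h2, Matrix.one_mul]
end

section
/- Let F : ℝ → Matrix (n×n, ℝ) be differentiable with F(t) invertible and F(τ) = I, and let A(t) = Ḟ(t)·F(t)⁻¹ with skew part A⁻(t) = (A(t) − A(t)ᵀ)/2 and symmetric part A⁺(t) = (A(t) + A(t)ᵀ)/2. If O solves Ȯ = A⁻(t)·O with O(τ) = I and M(t) := O(t)ᵀ·F(t), then Ṁ(t) = [O(t)ᵀ·A⁺(t)·O(t)]·M(t) and M(τ) = I; in particular Ṁ·M⁻¹ is symmetric for all t. -/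
open Matrix

private lemma hasDerivAt_tmul {n : ℕ} (X Y : ℝ → Matrix (Fin n) (Fin n) ℝ)
    (X' Y' : Matrix (Fin n) (Fin n) ℝ) (t : ℝ)
    (hX : ∀ i j, HasDerivAt (fun s => X s i j) (X' i j) t)
    (hY : ∀ i j, HasDerivAt (fun s => Y s i j) (Y' i j) t) (i j : Fin n) :
    HasDerivAt (fun s => ((X s)ᵀ * Y s) i j) ((X'ᵀ * Y t + (X t)ᵀ * Y') i j) t := by
  simp only [Matrix.mul_apply, Matrix.transpose_apply, Matrix.add_apply,
    ← Finset.sum_add_distrib]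
  exact HasDerivAt.fun_sum fun k _ => (hX k i).mul (hY k j)

theorem stmt8 {n : ℕ} (F F' O O' : ℝ → Matrix (Fin n) (Fin n) ℝ) (τ : ℝ)
    (hF' : ∀ t i j, HasDerivAt (fun s => F s i j) (F' t i j) t)
    (hFinv : ∀ t, IsUnit (F t)) (hFτ : F τ = 1)
    (hO' : ∀ t i j, HasDerivAt (fun s => O s i j) (O' t i j) t)
    (hOode : ∀ t, O' t
      = ((2:ℝ)⁻¹ • (F' t * (F t)⁻¹ - (F' t * (F t)⁻¹)ᵀ)) * O t)
    (hOτ : O τ = 1) :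
    (∀ t i j, HasDerivAt (fun s => ((O s)ᵀ * F s) i j)
      ((((O t)ᵀ * ((2:ℝ)⁻¹ • (F' t * (F t)⁻¹ + (F' t * (F t)⁻¹)ᵀ)) * O t)
        * ((O t)ᵀ * F t)) i j) t) ∧
    (O τ)ᵀ * F τ = 1 ∧
    (∀ t, ((O t)ᵀ * ((2:ℝ)⁻¹ • (F' t * (F t)⁻¹ + (F' t * (F t)⁻¹)ᵀ)) * O t)ᵀ
        = (O t)ᵀ * ((2:ℝ)⁻¹ • (F' t * (F t)⁻¹ + (F' t * (F t)⁻¹)ᵀ)) * O t) ∧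
    (∀ t, (((O t)ᵀ * ((2:ℝ)⁻¹ • (F' t * (F t)⁻¹ + (F' t * (F t)⁻¹)ᵀ)) * O t
        * ((O t)ᵀ * F t)) * ((O t)ᵀ * F t)⁻¹)ᵀ
      = ((O t)ᵀ * ((2:ℝ)⁻¹ • (F' t * (F t)⁻¹ + (F' t * (F t)⁻¹)ᵀ)) * O t
        * ((O t)ᵀ * F t)) * ((O t)ᵀ * F t)⁻¹) := by
  -- abbreviation
  have hSkew : ∀ t : ℝ, ((2:ℝ)⁻¹ • (F' t * (F t)⁻¹ - (F' t * (F t)⁻¹)ᵀ))ᵀ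
      = -((2:ℝ)⁻¹ • (F' t * (F t)⁻¹ - (F' t * (F t)⁻¹)ᵀ)) := by
    intro t
    rw [Matrix.transpose_smul, Matrix.transpose_sub, Matrix.transpose_transpose,
      ← smul_neg, neg_sub]
  -- zero derivative of OᵀO
  have hOtO0 : ∀ t, (O' t)ᵀ * O t + (O t)ᵀ * O' t = 0 := by
    intro t
    rw [hOode t, Matrix.transpose_mul, hSkew t]
    simp only [Matrix.mul_neg, Matrix.neg_mul, Matrix.mul_assoc]
    exact neg_add_cancel _
  -- OᵀO is constant = 1
  have hOtO : ∀ t, (O t)ᵀ * O t = 1 := by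
    intro t
    have hconst : (O t)ᵀ * O t = (O τ)ᵀ * O τ := by
      ext i j
      have hd : ∀ s : ℝ, HasDerivAt (fun u => ((O u)ᵀ * O u) i j) 0 s := by
        intro s
        have := hasDerivAt_tmul O O (O' s) (O' s) s (hO' s) (hO' s) i j
        rwa [hOtO0 s, Matrix.zero_apply] at this
      exact is_const_of_deriv_eq_zero (fun s => (hd s).differentiableAt)
        (fun s => (hd s).deriv) t τ
    rw [hconst, hOτ]
    simp
  have hOOt : ∀ t, O t * (O t)ᵀ = 1 := fun t => mul_eq_one_comm.mp (hOtO t)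
  have hFinvF : ∀ t, (F t)⁻¹ * F t = 1 := fun t =>
    Matrix.nonsing_inv_mul _ ((Matrix.isUnit_iff_isUnit_det _).mp (hFinv t))
  have hAF : ∀ t, (F' t * (F t)⁻¹) * F t = F' t := by
    intro t
    rw [Matrix.mul_assoc, hFinvF t, Matrix.mul_one]
  -- key derivative identity
  have hderiv : ∀ t, (O' t)ᵀ * F t + (O t)ᵀ * F' t
      = ((O t)ᵀ * ((2:ℝ)⁻¹ • (F' t * (F t)⁻¹ + (F' t * (F t)⁻¹)ᵀ)) * O t)
        * ((O t)ᵀ * F t) := by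
    intro t
    have h1 : ((O t)ᵀ * ((2:ℝ)⁻¹ • (F' t * (F t)⁻¹ + (F' t * (F t)⁻¹)ᵀ)) * O t)
          * ((O t)ᵀ * F t)
        = (O t)ᵀ * (((2:ℝ)⁻¹ • (F' t * (F t)⁻¹ + (F' t * (F t)⁻¹)ᵀ)) * F t) := by
      rw [Matrix.mul_assoc, Matrix.mul_assoc, ← Matrix.mul_assoc (O t), hOOt t,
        Matrix.one_mul, ← Matrix.mul_assoc]
    rw [h1, hOode t, Matrix.transpose_mul, hSkew t]
    nth_rewrite 2 [← hAF t]
    rw [Matrix.mul_assoc, ← Matrix.mul_add]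
    congr 1
    rw [Matrix.neg_mul, Matrix.smul_mul, Matrix.smul_mul, Matrix.sub_mul,
      Matrix.add_mul, hAF t]
    set X := F' t
    set Y := (F' t * (F t)⁻¹)ᵀ * F t
    module
  refine ⟨?_, ?_, ?_, ?_⟩
  · intro t i j
    have := hasDerivAt_tmul O F (O' t) (F' t) t (hO' t) (hF' t) i j
    rwa [hderiv t] at this
  · rw [hOτ, hFτ]; simp
  · intro t
    rw [Matrix.transpose_mul, Matrix.transpose_mul, Matrix.transpose_transpose,
      Matrix.transpose_smul, Matrix.transpose_add, Matrix.transpose_transpose,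
      add_comm ((F' t * (F t)⁻¹)ᵀ), Matrix.mul_assoc]
  · intro t
    have hMunit : IsUnit ((O t)ᵀ * F t).det := by
      rw [Matrix.det_mul, Matrix.det_transpose]
      have hdetO : IsUnit (O t).det := by
        have := congrArg Matrix.det (hOtO t)
        rw [Matrix.det_mul, Matrix.det_transpose, Matrix.det_one] at this
        exact IsUnit.of_mul_eq_one _ this
      exact hdetO.mul ((Matrix.isUnit_iff_isUnit_det _).mp (hFinv t))
    rw [Matrix.mul_assoc _ ((O t)ᵀ * F t), Matrix.mul_nonsing_inv _ hMunit,
      Matrix.mul_one]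
    rw [Matrix.transpose_mul, Matrix.transpose_mul, Matrix.transpose_transpose,
      Matrix.transpose_smul, Matrix.transpose_add, Matrix.transpose_transpose,
      add_comm ((F' t * (F t)⁻¹)ᵀ), Matrix.mul_assoc]
end

section
/- Let F : ℝ² → Matrix (n×n, ℝ) be a smooth linear process (F(t,t) = I, F(s,t)·F(τ,s) = F(τ,t)) with values in invertible matrices, and let O(τ, t) be the solution of ∂_t O(τ,t) = A⁻(t)·O(τ,t), O(τ,τ) = I, where A⁻(t) is the skew-symmetric part of ∂_t F(τ,t)·F(τ,t)⁻¹ (which is independent of τ). Then O is itself a linear process: O(τ, t) = O(s, t)·O(τ, s) for all τ, s, t, and O(τ,t) ∈ SO(n). -/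
open Matrix

lemma const_transpose_mul_aux {n : ℕ} (A X Y : ℝ → Matrix (Fin n) (Fin n) ℝ)
    (hAskew : ∀ t, (A t)ᵀ = -A t)
    (hX : ∀ t i j, HasDerivAt (fun u => X u i j) ((A t * X t) i j) t)
    (hY : ∀ t i j, HasDerivAt (fun u => Y u i j) ((A t * Y t) i j) t)
    (a b : ℝ) : (X a)ᵀ * Y a = (X b)ᵀ * Y b := by
  have key : ∀ i j t, HasDerivAt (fun u => ((X u)ᵀ * Y u) i j) 0 t := by
    intro i j t
    have h : HasDerivAt (fun u => ((X u)ᵀ * Y u) i j)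
        (∑ k, ((A t * X t) k i * Y t k j + X t k i * (A t * Y t) k j)) t := by
      have : (fun u => ((X u)ᵀ * Y u) i j) = fun u => ∑ k, X u k i * Y u k j := by
        funext u; simp [Matrix.mul_apply, Matrix.transpose_apply]
      rw [this]
      exact HasDerivAt.fun_sum fun k _ => (hX t k i).mul (hY t k j)
    have hz : (∑ k, ((A t * X t) k i * Y t k j + X t k i * (A t * Y t) k j)) = 0 := by
      have : (∑ k, ((A t * X t) k i * Y t k j + X t k i * (A t * Y t) k j))
          = ((A t * X t)ᵀ * Y t + (X t)ᵀ * (A t * Y t)) i j := by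
        simp [Matrix.mul_apply, Matrix.add_apply, Matrix.transpose_apply,
          Finset.sum_add_distrib, mul_comm]
      rw [this]
      have : (A t * X t)ᵀ * Y t + (X t)ᵀ * (A t * Y t) = 0 := by
        rw [Matrix.transpose_mul, hAskew t]
        simp [Matrix.mul_assoc]
      rw [this]; rfl
    rwa [hz] at h
  have hconst := fun i j => is_const_of_deriv_eq_zero
    (f := fun u => ((X u)ᵀ * Y u) i j)
    (fun t => (key i j t).differentiableAt)
    (fun t => (key i j t).deriv)
  ext i j
  exact hconst i j a b

theorem stmt18 {n : ℕ} (F F' : ℝ → ℝ → Matrix (Fin n) (Fin n) ℝ)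
    (Aminus : ℝ → Matrix (Fin n) (Fin n) ℝ)
    (O : ℝ → ℝ → Matrix (Fin n) (Fin n) ℝ)
    (hI : ∀ t, F t t = 1) (hproc : ∀ τ s t, F s t * F τ s = F τ t)
    (hFinv : ∀ τ t, IsUnit (F τ t))
    (hF' : ∀ τ t i j, HasDerivAt (fun u => F τ u i j) (F' τ t i j) t)
    (hA : ∀ τ t, Aminus t
      = (2:ℝ)⁻¹ • (F' τ t * (F τ t)⁻¹ - (F' τ t * (F τ t)⁻¹)ᵀ))
    (hO' : ∀ τ t i j, HasDerivAt (fun u => O τ u i j) ((Aminus t * O τ t) i j) t)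
    (hOτ : ∀ τ, O τ τ = 1) :
    (∀ τ s t, O τ t = O s t * O τ s) ∧
    (∀ τ t, (O τ t)ᵀ * O τ t = 1 ∧ (O τ t).det = 1) := by
  have hskew : ∀ t, (Aminus t)ᵀ = -Aminus t := by
    intro t
    rw [hA 0 t]
    simp [Matrix.transpose_smul, Matrix.transpose_sub, smul_sub]
  -- orthogonality
  have horth : ∀ τ t, (O τ t)ᵀ * O τ t = 1 := by
    intro τ t
    have := const_transpose_mul_aux Aminus (O τ) (O τ) hskew (hO' τ) (hO' τ) t τ
    rw [this, hOτ τ]; simp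
  -- process property
  have hprocO : ∀ τ s t, O τ t = O s t * O τ s := by
    intro τ s t
    have hc := const_transpose_mul_aux Aminus (O s) (O τ) hskew (hO' s) (hO' τ) t s
    rw [hOτ s] at hc
    simp only [Matrix.transpose_one, Matrix.one_mul] at hc
    have hright : O s t * (O s t)ᵀ = 1 := mul_eq_one_comm.mp (horth s t)
    calc O τ t = (O s t * (O s t)ᵀ) * O τ t := by rw [hright, Matrix.one_mul]
      _ = O s t * ((O s t)ᵀ * O τ t) := by rw [Matrix.mul_assoc]
      _ = O s t * O τ s := by rw [hc]
  refine ⟨hprocO, fun τ t => ⟨horth τ t, ?_⟩⟩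
  -- det = 1
  have hdetsq : ∀ u, (O τ u).det ^ 2 = 1 := by
    intro u
    have := congrArg Matrix.det (horth τ u)
    rwa [Matrix.det_mul, Matrix.det_transpose, Matrix.det_one, ← sq] at this
  have hcontE : Continuous fun u => (O τ u).det := by
    refine Continuous.matrix_det (continuous_matrix fun i j => ?_)
    have hd : Differentiable ℝ (fun u => O τ u i j) := fun x => (hO' τ x i j).differentiableAt
    exact hd.continuous
  have hτ1 : (O τ τ).det = 1 := by rw [hOτ τ]; simp
  by_contra hne
  have hm1 : (O τ t).det = -1 := by
    have h2 : ((O τ t).det - 1) * ((O τ t).det + 1) = 0 := by nlinarith [hdetsq t]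
    rcases mul_eq_zero.mp h2 with h | h
    · exact absurd (by linarith) hne
    · linarith
  have hiv := intermediate_value_uIcc (a := τ) (b := t)
    (f := fun u => (O τ u).det) hcontE.continuousOn
  have h0 : (0:ℝ) ∈ Set.uIcc ((fun u => (O τ u).det) τ) ((fun u => (O τ u).det) t) := by
    simp only [hτ1, hm1]
    rw [Set.uIcc_of_ge (by norm_num : (-1:ℝ) ≤ 1)]
    constructor <;> norm_num
  obtain ⟨c, _, hc⟩ := hiv h0
  have hc' : (O τ c).det = 0 := hc
  have := hdetsq c
  rw [hc'] at this
  norm_num at this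
end
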